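/- arXiv:2311.10666 — 5 statements merged into one kernel-verified Lean document; each statement's English description precedes it below -/
import Mathlib

section
/- Let d, k be positive integers with k ≥ 2 and 2^(k-2) < d, and let X ⊆ [0,1]^d be a finite set of points that intersects every box B^{A,j} for all A ⊆ {1,…,d} with #A = 2^(k-2) and all j ∈ {1,…,d} \ A, where B^{A,j} = I_1 × ⋯ × I_d with I_j = (0,2^(1-k)), I_i = (2^(1-k),1) for i ∈ A, and I_i = (0,1) otherwise. For j ∈ {1,…,d}, define F_j = {x ∈ X : x_j < 2^(1-k)}. Then the family {F_1, …, F_d} is 2^(k-2)-cover-free: for every j and every set A ⊆ {1,…,d}\{j} with #A = 2^(k-2), F_j is not contained in the union of the F_i for i ∈ A. -/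
open Classical in
theorem cover_free_family (d k : ℕ) (hk : 2 ≤ k) (hkd : 2 ^ (k - 2) < d)
    (X : Finset (Fin d → ℝ)) (hX : ∀ x ∈ X, ∀ i, x i ∈ Set.Icc (0 : ℝ) 1)
    (hhit : ∀ A : Finset (Fin d), A.card = 2 ^ (k - 2) → ∀ j ∉ A, ∃ x ∈ X,
      (0 < x j ∧ x j < (2 : ℝ) ^ ((1 : ℤ) - k)) ∧
      (∀ i ∈ A, (2 : ℝ) ^ ((1 : ℤ) - k) < x i ∧ x i < 1) ∧
      (∀ i, i ≠ j → i ∉ A → 0 < x i ∧ x i < 1)) :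
    ∀ (j : Fin d) (A : Finset (Fin d)), A.card = 2 ^ (k - 2) → j ∉ A →
      ¬ ((X.filter fun x => x j < (2 : ℝ) ^ ((1 : ℤ) - k)) ⊆
        A.biUnion fun i => X.filter fun x => x i < (2 : ℝ) ^ ((1 : ℤ) - k)) := by
  intro j A hA hjA hsub
  obtain ⟨x, hxX, ⟨_, hxj⟩, hxA, _⟩ := hhit A hA j hjA
  have hx : x ∈ X.filter fun x => x j < (2 : ℝ) ^ ((1 : ℤ) - k) := by
    simp [hxX, hxj]
  have := hsub hx
  simp only [Finset.mem_biUnion, Finset.mem_filter] at this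
  obtain ⟨i, hiA, _, hlt⟩ := this
  exact absurd hlt (not_lt.2 (hxA i hiA).1.le)
end

section
/- Let d ≥ 2 be an integer and let ε be a real number with 1/8 < ε ≤ 1/4. Then every finite set X ⊆ [0,1]^d with disp(X) ≤ ε satisfies #X ≥ log₂ d; consequently N(ε,d) ≥ log₂ d > (3/64) · (log d)/(ε² · log(1/ε)). -/
/-- The dispersion of a set of points `X ⊆ [0,1]^d`: the supremum of volumes of
open axis-parallel boxes in `[0,1]^d` avoiding `X`. -/
noncomputable def disp {d : ℕ} (X : Set (Fin d → ℝ)) : ℝ :=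
  sSup {v | ∃ a b : Fin d → ℝ, (∀ i, 0 ≤ a i ∧ a i < b i ∧ b i ≤ 1) ∧
    (∀ x ∈ X, ∃ i, x i ∉ Set.Ioo (a i) (b i)) ∧ v = ∏ i, (b i - a i)}

/-- The minimal dispersion of an `n`-point subset of `[0,1]^d`. -/
noncomputable def dispStar (n d : ℕ) : ℝ :=
  sInf {v | ∃ X : Finset (Fin d → ℝ),
    (∀ x ∈ X, ∀ i, x i ∈ Set.Icc (0 : ℝ) 1) ∧ X.card = n ∧ v = disp (X : Set (Fin d → ℝ))}

/-- `N(ε,d)`: the minimal number of points of a subset of `[0,1]^d` with dispersion `≤ ε`. -/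
noncomputable def Nfun (ε : ℝ) (d : ℕ) : ℕ :=
  sInf {n | ∃ X : Finset (Fin d → ℝ),
    (∀ x ∈ X, ∀ i, x i ∈ Set.Icc (0 : ℝ) 1) ∧ X.card = n ∧ disp (X : Set (Fin d → ℝ)) ≤ ε}

lemma disp_set_bddAbove {d : ℕ} (X : Set (Fin d → ℝ)) :
    BddAbove {v | ∃ a b : Fin d → ℝ, (∀ i, 0 ≤ a i ∧ a i < b i ∧ b i ≤ 1) ∧
    (∀ x ∈ X, ∃ i, x i ∉ Set.Ioo (a i) (b i)) ∧ v = ∏ i, (b i - a i)} := by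
  refine ⟨1, ?_⟩
  rintro v ⟨a, b, hab, -, rfl⟩
  exact Finset.prod_le_one (fun i _ => by linarith [(hab i).1, (hab i).2.1])
    (fun i _ => by linarith [(hab i).1, (hab i).2.1, (hab i).2.2])

lemma card_ge {d : ℕ} {ε : ℝ} (hε2 : ε ≤ 1/4)
    (X : Finset (Fin d → ℝ)) (hX : ∀ x ∈ X, ∀ i, x i ∈ Set.Icc (0:ℝ) 1)
    (hdisp : disp (X : Set (Fin d → ℝ)) ≤ ε) : (d : ℝ) ≤ 2 ^ X.card := by
  have hinj : Function.Injective
      (fun j : Fin d => X.filter (fun x => x j < 1/2)) := by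
    intro i j hij
    by_contra hne
    simp only at hij
    set M : Finset ℝ :=
      insert (1/4 : ℝ) ((X.filter (fun x => x i < 1/2)).image (fun x => x i)) with hM
    have hMne : M.Nonempty := ⟨1/4, Finset.mem_insert_self _ _⟩
    set t := M.max' hMne with ht
    have ht2 : t < 1/2 := by
      rw [ht, Finset.max'_lt_iff]
      intro y hy
      rcases Finset.mem_insert.1 hy with h | h
      · rw [h]; norm_num
      · obtain ⟨x, hx, rfl⟩ := Finset.mem_image.1 h
        exact (Finset.mem_filter.1 hx).2
    have ht1 : (1/4:ℝ) ≤ t := Finset.le_max' _ _ (Finset.mem_insert_self _ _)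
    set c := (t + 1/2)/2 with hc
    have hc1 : t < c := by rw [hc]; linarith
    have hc2 : c < 1/2 := by rw [hc]; linarith
    have hc0 : (0:ℝ) ≤ c := by linarith
    set a : Fin d → ℝ := fun k => if k = i then c else 0 with ha
    set b : Fin d → ℝ := fun k => if k = j then 1/2 else 1 with hb
    have hij' : i ≠ j := hne
    have hbi : b i = 1 := by simp [hb, hij']
    have haj : a j = 0 := by simp [ha, hij'.symm]
    have hai : a i = c := by simp [ha]
    have hbj : b j = 1/2 := by simp [hb]
    have hcond : ∀ k, 0 ≤ a k ∧ a k < b k ∧ b k ≤ 1 := by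
      intro k
      by_cases h1 : k = i
      · subst h1; rw [hai, hbi]; exact ⟨hc0, by linarith, le_refl 1⟩
      · by_cases h2 : k = j
        · subst h2; rw [haj, hbj]
          refine ⟨le_refl 0, by norm_num, by norm_num⟩
        · simp only [ha, hb, if_neg h1, if_neg h2]; norm_num
    have havoid : ∀ x ∈ (X : Set (Fin d → ℝ)), ∃ k, x k ∉ Set.Ioo (a k) (b k) := by
      intro x hx
      have hxX : x ∈ X := hx
      by_cases h : x j ∈ Set.Ioo (a j) (b j)
      · refine ⟨i, ?_⟩
        rw [haj, hbj] at h
        have hxj : x j < 1/2 := h.2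
        have : x ∈ X.filter (fun x => x i < 1/2) := by
          rw [hij]; exact Finset.mem_filter.2 ⟨hxX, hxj⟩
        have hxi : x i < 1/2 := (Finset.mem_filter.1 this).2
        have hxiM : x i ∈ M := by
          apply Finset.mem_insert_of_mem
          exact Finset.mem_image.2 ⟨x, Finset.mem_filter.2 ⟨hxX, hxi⟩, rfl⟩
        have : x i ≤ t := Finset.le_max' _ _ hxiM
        rw [Set.mem_Ioo, hai, hbi]
        push_neg
        intro hcon
        linarith
      · exact ⟨j, h⟩
    have hprod : ∏ k, (b k - a k) = (1 - c) * (1/2) := by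
      have h1 : ∏ k ∈ ({i, j} : Finset (Fin d)), (b k - a k) = ∏ k, (b k - a k) := by
        apply Finset.prod_subset (Finset.subset_univ _)
        intro k _ hk
        simp only [Finset.mem_insert, Finset.mem_singleton, not_or] at hk
        simp [ha, hb, hk.1, hk.2]
      rw [← h1, Finset.prod_pair hij', hai, hbi, haj, hbj]
      ring
    have hmem : (1 - c) * (1/2) ∈ {v | ∃ a b : Fin d → ℝ,
        (∀ i, 0 ≤ a i ∧ a i < b i ∧ b i ≤ 1) ∧
        (∀ x ∈ (X : Set (Fin d → ℝ)), ∃ i, x i ∉ Set.Ioo (a i) (b i)) ∧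
        v = ∏ i, (b i - a i)} := ⟨a, b, hcond, havoid, hprod.symm⟩
    have hle : (1 - c) * (1/2) ≤ disp (X : Set (Fin d → ℝ)) :=
      le_csSup (disp_set_bddAbove _) hmem
    have : (1:ℝ)/4 < (1 - c) * (1/2) := by nlinarith
    linarith
  have hcard : d ≤ 2 ^ X.card := by
    have h := Finset.card_le_card_of_injOn (s := (Finset.univ : Finset (Fin d)))
      (t := X.powerset)
      (fun j : Fin d => X.filter (fun x => x j < 1/2))
      (fun k _ => Finset.mem_powerset.2 (Finset.filter_subset _ _))
      (hinj.injOn)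
    simpa [Finset.card_powerset] using h
  exact_mod_cast hcard

lemma grid_exists (d : ℕ) {ε : ℝ} (hε1 : 1/8 < ε) :
    ∃ X : Finset (Fin d → ℝ), (∀ x ∈ X, ∀ i, x i ∈ Set.Icc (0:ℝ) 1) ∧
      disp (X : Set (Fin d → ℝ)) ≤ ε := by
  set G : Finset ℝ := (Finset.range 7).image (fun k : ℕ => ((k:ℝ)+1)/8) with hG
  have hGmem : ∀ g ∈ G, g ∈ Set.Icc (0:ℝ) 1 := by
    intro g hg
    obtain ⟨k, hk, rfl⟩ := Finset.mem_image.1 hg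
    have hk7 : k < 7 := Finset.mem_range.1 hk
    constructor
    · positivity
    · have : (k:ℝ) ≤ 6 := by exact_mod_cast Nat.lt_succ_iff.1 hk7
      linarith
  refine ⟨Fintype.piFinset (fun _ : Fin d => G), ?_, ?_⟩
  · intro x hx i
    exact hGmem _ (Fintype.mem_piFinset.1 hx i)
  · apply Real.sSup_le
    · rintro v ⟨a, b, hab, havoid, rfl⟩
      -- there is a coordinate whose interval avoids G
      have hex : ∃ i, ∀ g ∈ G, g ∉ Set.Ioo (a i) (b i) := by
        by_contra hcon
        push_neg at hcon
        choose g hg1 hg2 using hcon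
        have hmem : (fun i => g i) ∈ Fintype.piFinset (fun _ : Fin d => G) :=
          Fintype.mem_piFinset.2 hg1
        obtain ⟨i, hi⟩ := havoid _ hmem
        exact hi (hg2 i)
      obtain ⟨i, hi⟩ := hex
      have hsmall : b i - a i ≤ 1/8 := by
        by_contra hbig
        push_neg at hbig
        have hai : 0 ≤ a i := (hab i).1
        have hbi : b i ≤ 1 := (hab i).2.2
        set m := ⌊(8:ℝ) * a i⌋ with hm
        have hm0 : 0 ≤ m := Int.floor_nonneg.2 (by linarith)
        have hm6 : m ≤ 6 := by
          have h7 : (8:ℝ) * a i < 7 := by linarith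
          have hfl : (m:ℝ) ≤ 8 * a i := Int.floor_le _
          have : (m:ℝ) < 7 := lt_of_le_of_lt hfl h7
          have : m < 7 := by exact_mod_cast this
          omega
        have hg : ((m.toNat : ℝ) + 1)/8 ∈ G := by
          refine Finset.mem_image.2 ⟨m.toNat, Finset.mem_range.2 ?_, rfl⟩
          omega
        have hmr : ((m.toNat : ℝ)) = (m : ℝ) := by
          exact_mod_cast Int.toNat_of_nonneg hm0
        apply hi _ hg
        rw [hmr]
        constructor
        · have := Int.lt_floor_add_one ((8:ℝ) * a i)
          rw [← hm] at this
          linarith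
        · have := Int.floor_le ((8:ℝ) * a i)
          rw [← hm] at this
          linarith
      calc ∏ k, (b k - a k) = (b i - a i) * ∏ k ∈ Finset.univ.erase i, (b k - a k) := by
            exact (Finset.mul_prod_erase _ _ (Finset.mem_univ i)).symm
        _ ≤ (1/8) * 1 := by
            apply mul_le_mul hsmall
            · exact Finset.prod_le_one (fun k _ => by linarith [(hab k).1, (hab k).2.1])
                (fun k _ => by linarith [(hab k).1, (hab k).2.1, (hab k).2.2])
            · exact Finset.prod_nonneg (fun k _ => by linarith [(hab k).1, (hab k).2.1])
            · norm_num
        _ ≤ ε := by linarith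
    · linarith

lemma key_analytic {ε : ℝ} (h1 : 1/8 < ε) (h2 : ε ≤ 1/4) :
    (3/64) * Real.log 2 < ε^2 * Real.log (1/ε) := by
  have hmono : StrictMonoOn (fun x : ℝ => -(x^2 * Real.log x)) (Set.Icc (1/8) (1/4)) := by
    apply strictMonoOn_of_deriv_pos (convex_Icc _ _)
    · apply ContinuousOn.neg
      apply ContinuousOn.mul (continuousOn_pow 2)
      apply Real.continuousOn_log.mono
      intro x hx
      simp only [Set.mem_Icc] at hx
      simp only [Set.mem_compl_iff, Set.mem_singleton_iff]
      intro h; rw [h] at hx; linarith [hx.1]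
    · intro x hx
      rw [interior_Icc] at hx
      obtain ⟨hx1, hx2⟩ := hx
      have hx0 : x ≠ 0 := by intro h; rw [h] at hx1; linarith
      have hderiv : HasDerivAt (fun x : ℝ => -(x^2 * Real.log x))
          (-(2*x * Real.log x + x^2 * x⁻¹)) x := by
        have h1 : HasDerivAt (fun x : ℝ => x^2) (2*x) x := by
          simpa using hasDerivAt_pow 2 x
        exact ((h1.mul (Real.hasDerivAt_log hx0))).neg
      rw [hderiv.deriv]
      have hlog : Real.log x < -(1/2) := by
        have : Real.log x < Real.log (1/4) := by
          apply Real.log_lt_log (by linarith) hx2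
        have h4 : Real.log (1/4) = -(2 * Real.log 2) := by
          rw [show (1:ℝ)/4 = (2:ℝ)^(-2 : ℤ) by norm_num, Real.log_zpow]
          push_cast; ring
        have hl2 : 0.6931471803 < Real.log 2 := Real.log_two_gt_d9
        linarith
      have hxpos : 0 < x := by linarith
      have hsq : x^2 * x⁻¹ = x := by field_simp
      rw [hsq]
      nlinarith
  have h18 : (1/8 : ℝ) ∈ Set.Icc (1/8 : ℝ) (1/4) := by constructor <;> norm_num
  have hεm : ε ∈ Set.Icc (1/8 : ℝ) (1/4) := ⟨h1.le, h2⟩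
  have := hmono h18 hεm h1
  simp only at this
  have hl8 : Real.log (1/8) = -(3 * Real.log 2) := by
    rw [show (1:ℝ)/8 = (2:ℝ)^(-3 : ℤ) by norm_num, Real.log_zpow]
    push_cast; ring
  have hinv : Real.log (1/ε) = -Real.log ε := by
    rw [one_div, Real.log_inv]
  rw [hinv]
  rw [hl8] at this
  nlinarith

theorem case_k_eq_two (d : ℕ) (hd : 2 ≤ d) (ε : ℝ) (hε1 : 1 / 8 < ε) (hε2 : ε ≤ 1 / 4) :
    (∀ X : Finset (Fin d → ℝ), (∀ x ∈ X, ∀ i, x i ∈ Set.Icc (0 : ℝ) 1) →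
      disp (X : Set (Fin d → ℝ)) ≤ ε → (X.card : ℝ) ≥ Real.logb 2 d) ∧
    (Nfun ε d : ℝ) ≥ Real.logb 2 d ∧
    Real.logb 2 d > (3 / 64) * Real.log d / (ε ^ 2 * Real.log (1 / ε)) := by
  have hpart1 : ∀ X : Finset (Fin d → ℝ), (∀ x ∈ X, ∀ i, x i ∈ Set.Icc (0 : ℝ) 1) →
      disp (X : Set (Fin d → ℝ)) ≤ ε → (X.card : ℝ) ≥ Real.logb 2 d := by
    intro X hX hdisp
    have h := card_ge hε2 X hX hdisp
    have h2 : Real.logb 2 d ≤ Real.logb 2 (2 ^ X.card) := by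
      apply Real.logb_le_logb_of_le (by norm_num)
      · exact_mod_cast Nat.cast_pos.2 (by omega)
      · exact_mod_cast h
    have h3 : Real.logb 2 ((2:ℝ) ^ X.card) = X.card := by
      rw [Real.logb_pow, Real.logb_self_eq_one (by norm_num)]
      ring
    rw [ge_iff_le]
    calc Real.logb 2 d ≤ Real.logb 2 ((2:ℝ) ^ X.card) := by exact_mod_cast h2
      _ = X.card := h3
  refine ⟨hpart1, ?_, ?_⟩
  · obtain ⟨X0, hX0c, hX0d⟩ := grid_exists d hε1
    have hne : {n | ∃ X : Finset (Fin d → ℝ),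
        (∀ x ∈ X, ∀ i, x i ∈ Set.Icc (0 : ℝ) 1) ∧ X.card = n ∧
        disp (X : Set (Fin d → ℝ)) ≤ ε}.Nonempty := ⟨X0.card, X0, hX0c, rfl, hX0d⟩
    have hmem := Nat.sInf_mem hne
    obtain ⟨X, hXc, hXcard, hXd⟩ := hmem
    rw [ge_iff_le, Nfun, ← hXcard]
    exact hpart1 X hXc hXd
  · have hlogd : 0 < Real.log d := Real.log_pos (by exact_mod_cast by omega : (1:ℝ) < d)
    have hkey := key_analytic hε1 hε2
    have hl2 : (0:ℝ) < Real.log 2 := Real.log_pos (by norm_num)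
    have hden : 0 < ε^2 * Real.log (1/ε) := by nlinarith
    rw [Real.logb, gt_iff_lt, div_lt_div_iff₀ hden hl2]
    calc (3/64) * Real.log d * Real.log 2 = ((3/64) * Real.log 2) * Real.log d := by ring
      _ < (ε^2 * Real.log (1/ε)) * Real.log d := by nlinarith
      _ = Real.log d * (ε^2 * Real.log (1/ε)) := by ring
end

section
/- There exist constants c₁, c₂ > 0 such that, assuming the lower bound N(ε,d) > (1/1920)·(log d)/(ε²·log(1/ε)) valid for 1/(4√d) ≤ ε ≤ 1/4, for all integers d ≥ 2 and n with 2 log d ≤ n ≤ c₁ d, the minimal dispersion satisfies disp*(n,d) ≥ c₂ · ((log d)/n)^(1/2) · (log(n/log d))^(-1/2). -/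
set_option maxHeartbeats 1000000

lemma disp_nonneg {d : ℕ} (X : Set (Fin d → ℝ)) : 0 ≤ disp X := by
  apply Real.sSup_nonneg
  rintro v ⟨a, b, hab, -, rfl⟩
  exact Finset.prod_nonneg fun i _ => by linarith [(hab i).1, (hab i).2.1]

lemma log200_le_six : Real.log 200 ≤ 6 := by
  rw [show (6:ℝ) = (6:ℕ) * 1 by norm_num, ← Real.log_exp ((6:ℕ) * 1)]
  apply Real.log_le_log (by norm_num)
  rw [Real.exp_nat_mul]
  calc (200:ℝ) ≤ 2.7^(6:ℕ) := by norm_num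
    _ ≤ (Real.exp 1)^(6:ℕ) := by
        apply pow_le_pow_left₀ (by norm_num)
        linarith [Real.exp_one_gt_d9]

theorem corollary_dispStar
    (hN : ∀ (d : ℕ) (ε : ℝ), 2 ≤ d → 1 / (4 * Real.sqrt d) ≤ ε → ε ≤ 1 / 4 →
      (Nfun ε d : ℝ) > (1 / 1920) * Real.log d / (ε ^ 2 * Real.log (1 / ε))) :
    ∃ c₁ c₂ : ℝ, 0 < c₁ ∧ 0 < c₂ ∧
      ∀ d n : ℕ, 2 ≤ d → 2 * Real.log d ≤ (n : ℝ) → (n : ℝ) ≤ c₁ * d →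
        dispStar n d ≥ c₂ * (Real.log d / n) ^ ((1 : ℝ) / 2) *
          (Real.log ((n : ℝ) / Real.log d)) ^ (-(1 : ℝ) / 2) := by
  refine ⟨1/2500, 1/200, by norm_num, by norm_num, ?_⟩
  intro d n hd hn1 hn2
  have hd1 : (1:ℝ) < d := by exact_mod_cast lt_of_lt_of_le one_lt_two hd
  have hdpos : (0:ℝ) < d := by linarith
  have hlogd : 0 < Real.log d := Real.log_pos hd1
  have hlog2 : (0.6931471803:ℝ) < Real.log 2 := Real.log_two_gt_d9
  have hlogd2 : Real.log 2 ≤ Real.log d := Real.log_le_log (by norm_num) (by exact_mod_cast hd)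
  have hn_pos : (0:ℝ) < n := by nlinarith
  set L := Real.log ((n:ℝ) / Real.log d) with hLdef
  have hratio_pos : (0:ℝ) < (n:ℝ) / Real.log d := div_pos hn_pos hlogd
  have hratio2 : (2:ℝ) ≤ (n:ℝ) / Real.log d := (le_div_iff₀ hlogd).2 (by linarith)
  have hL2 : Real.log 2 ≤ L := Real.log_le_log (by norm_num) hratio2
  have hLpos : 0 < L := by linarith
  have hLled : L ≤ Real.log d := by
    apply Real.log_le_log hratio_pos
    rw [div_le_iff₀ hlogd]
    have h1 : (d:ℝ) * Real.log 2 ≤ (d:ℝ) * Real.log d :=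
      mul_le_mul_of_nonneg_left hlogd2 hdpos.le
    have h2 : (d:ℝ) * 0.6931471803 ≤ (d:ℝ) * Real.log 2 :=
      mul_le_mul_of_nonneg_left hlog2.le hdpos.le
    nlinarith
  set ε₀ := (1/200:ℝ) * (Real.log d / n) ^ ((1:ℝ)/2) * L ^ (-(1:ℝ)/2) with hε₀def
  have hx_pos : 0 < Real.log d / n := div_pos hlogd hn_pos
  have hε₀pos : 0 < ε₀ :=
    mul_pos (mul_pos (by norm_num) (Real.rpow_pos_of_pos hx_pos _))
      (Real.rpow_pos_of_pos hLpos _)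
  have hsq : ε₀^2 = (1/200:ℝ)^2 * (Real.log d / n) * L⁻¹ := by
    rw [hε₀def, mul_pow, mul_pow]
    rw [← Real.rpow_natCast ((Real.log d / n) ^ ((1:ℝ)/2)) 2, ← Real.rpow_mul hx_pos.le]
    rw [← Real.rpow_natCast (L ^ (-(1:ℝ)/2)) 2, ← Real.rpow_mul hLpos.le]
    norm_num [Real.rpow_neg_one]
  have hxle : Real.log d / n ≤ 1/2 := by
    rw [div_le_iff₀ hn_pos]; linarith
  have hLinvnn : (0:ℝ) ≤ L⁻¹ := inv_nonneg.2 hLpos.le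
  have hLinv : L⁻¹ ≤ 2 := by
    have h12 : (1/2:ℝ) ≤ L := by linarith
    calc L⁻¹ ≤ (1/2:ℝ)⁻¹ := inv_anti₀ (by norm_num) h12
      _ = 2 := by norm_num
  have hε₀sqle : ε₀^2 ≤ 1/40000 := by
    rw [hsq]; nlinarith
  have hε₀le : ε₀ ≤ 1/4 := by nlinarith
  -- lower bound on ε₀
  have hsd : (0:ℝ) < Real.sqrt d := Real.sqrt_pos.2 hdpos
  have hε₀sqge : 1/(16*(d:ℝ)) ≤ ε₀^2 := by
    rw [hsq]
    have e1 : Real.log d / ((1/2500) * (d:ℝ)) ≤ Real.log d / n :=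
      div_le_div_of_nonneg_left hlogd.le hn_pos hn2
    have e2 : (Real.log d)⁻¹ ≤ L⁻¹ := inv_anti₀ hLpos hLled
    calc 1/(16*(d:ℝ))
        = (1/200:ℝ)^2 * (Real.log d / ((1/2500) * d)) * (Real.log d)⁻¹ := by
          field_simp
          ring
      _ ≤ (1/200:ℝ)^2 * (Real.log d / n) * L⁻¹ := by
          apply mul_le_mul (mul_le_mul_of_nonneg_left e1 (by norm_num)) e2
            (inv_nonneg.2 hlogd.le) (by positivity)
  have hε₀lb : 1/(4*Real.sqrt d) ≤ ε₀ := by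
    have hss : (1/(4*Real.sqrt d))^2 = 1/(16*(d:ℝ)) := by
      rw [div_pow, mul_pow, Real.sq_sqrt hdpos.le]; norm_num
    have ha : (0:ℝ) < 1/(4*Real.sqrt d) := by positivity
    calc 1/(4*Real.sqrt d) = Real.sqrt ((1/(4*Real.sqrt d))^2) := (Real.sqrt_sq ha.le).symm
      _ = Real.sqrt (1/(16*(d:ℝ))) := by rw [hss]
      _ ≤ Real.sqrt (ε₀^2) := Real.sqrt_le_sqrt hε₀sqge
      _ = ε₀ := Real.sqrt_sq hε₀pos.le
  -- by contradiction
  by_contra hcon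
  push_neg at hcon
  -- a nonempty candidate set
  have hd0 : 0 < d := by omega
  have hinj : Function.Injective (fun k : ℕ => fun _ : Fin d => (k:ℝ)/n) := by
    intro a b hab
    have := congrFun hab ⟨0, hd0⟩
    have hn0 : (n:ℝ) ≠ 0 := ne_of_gt hn_pos
    field_simp at this
    exact_mod_cast this
  set X₀ : Finset (Fin d → ℝ) := (Finset.range n).image (fun k : ℕ => fun _ : Fin d => (k:ℝ)/(n:ℝ))
    with hX₀def
  have hX₀card : X₀.card = n := by
    rw [hX₀def, Finset.card_image_of_injective _ hinj, Finset.card_range]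
  have hX₀cube : ∀ x ∈ X₀, ∀ i, x i ∈ Set.Icc (0:ℝ) 1 := by
    intro x hx i
    rw [hX₀def, Finset.mem_image] at hx
    obtain ⟨k, hk, rfl⟩ := hx
    rw [Finset.mem_range] at hk
    constructor
    · positivity
    · rw [div_le_one hn_pos]
      exact_mod_cast hk.le
  have hSne : {v | ∃ X : Finset (Fin d → ℝ),
      (∀ x ∈ X, ∀ i, x i ∈ Set.Icc (0 : ℝ) 1) ∧ X.card = n ∧
      v = disp (X : Set (Fin d → ℝ))}.Nonempty :=
    ⟨disp (X₀ : Set (Fin d → ℝ)), X₀, hX₀cube, hX₀card, rfl⟩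
  unfold dispStar at hcon
  obtain ⟨v, hv, hvlt⟩ := exists_lt_of_csInf_lt hSne hcon
  obtain ⟨X, hXcube, hXcard, rfl⟩ := hv
  -- N(ε₀, d) ≤ n
  have hNle : Nfun ε₀ d ≤ n := Nat.sInf_le ⟨X, hXcube, hXcard, hvlt.le⟩
  have hNn : (Nfun ε₀ d : ℝ) ≤ n := by exact_mod_cast hNle
  have hNbig := hN d ε₀ hd hε₀lb hε₀le
  -- the quantity A = log(1/ε₀)
  set A := Real.log (1/ε₀) with hAdef
  have hApos : 0 < A := Real.log_pos ((one_lt_div hε₀pos).2 (by linarith))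
  have hLeq : L = Real.log n - Real.log (Real.log d) := by
    rw [hLdef, Real.log_div (ne_of_gt hn_pos) (ne_of_gt hlogd)]
  have hAeq : A = Real.log 200 + L/2 + Real.log L / 2 := by
    rw [hAdef, one_div, Real.log_inv, hε₀def]
    rw [Real.log_mul (by positivity) (ne_of_gt (Real.rpow_pos_of_pos hLpos _))]
    rw [Real.log_mul (by norm_num) (ne_of_gt (Real.rpow_pos_of_pos hx_pos _))]
    rw [Real.log_rpow hx_pos, Real.log_rpow hLpos]
    rw [Real.log_div (ne_of_gt hlogd) (ne_of_gt hn_pos)]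
    rw [show ((1:ℝ)/200) = (200:ℝ)⁻¹ by norm_num, Real.log_inv]
    rw [hLeq]
    ring
  have hlogL : Real.log L ≤ L := by
    linarith [Real.log_le_sub_one_of_pos hLpos]
  have hA10 : A ≤ 10 * L := by
    rw [hAeq]
    have h6 : (6:ℝ) ≤ 9 * L := by linarith
    linarith [log200_le_six]
  have hden : 0 < ε₀^2 * A := mul_pos (pow_pos hε₀pos 2) hApos
  have key : (n:ℝ) * (ε₀^2 * A) ≤ 1/1920 * Real.log d := by
    have hn0 : (n:ℝ) ≠ 0 := ne_of_gt hn_pos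
    have e : (n:ℝ) * (ε₀^2 * A) = 1/40000 * Real.log d * (A / L) := by
      rw [hsq]
      have : (n:ℝ) * ((1/200:ℝ)^2 * (Real.log d / n) * L⁻¹ * A)
          = ((n:ℝ)/n) * (1/40000 * Real.log d * (A / L)) := by ring
      rw [this, div_self hn0, one_mul]
    rw [e]
    have hAL : A / L ≤ 10 := (div_le_iff₀ hLpos).2 (by linarith)
    have hALnn : 0 ≤ A / L := div_nonneg hApos.le hLpos.le
    nlinarith
  have hB : (n:ℝ) ≤ 1/1920 * Real.log d / (ε₀^2 * A) := (le_div_iff₀ hden).2 key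
  linarith
end

section
/- For every integer d ≥ 2 and real ε with 0 < ε < 1/4, it holds that N(ε,d) ≥ (log₂ d)/(8ε), where N(ε,d) is the minimal number of points in [0,1]^d achieving dispersion at most ε. -/
open Finset

set_option linter.unnecessarySeqFocus false

noncomputable def cval {D : ℕ} (Y : Finset (Fin D → ℝ)) (j : Fin D) : ℝ :=
  (insert (1:ℝ) ((Y.filter fun p => (1/2:ℝ) < p j).image fun p => p j)).min'
    (Finset.insert_nonempty _ _)

lemma cval_le_one {D : ℕ} (Y : Finset (Fin D → ℝ)) (j : Fin D) : cval Y j ≤ 1 :=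
  Finset.min'_le _ _ (Finset.mem_insert_self _ _)

lemma half_lt_cval {D : ℕ} (Y : Finset (Fin D → ℝ)) (j : Fin D) : (1/2:ℝ) < cval Y j := by
  rw [cval, Finset.lt_min'_iff]
  intro y hy
  rcases Finset.mem_insert.mp hy with h | h
  · rw [h]; norm_num
  · obtain ⟨p, hp, rfl⟩ := Finset.mem_image.mp h
    exact (Finset.mem_filter.mp hp).2

lemma cval_le {D : ℕ} (Y : Finset (Fin D → ℝ)) (j : Fin D) (p : Fin D → ℝ)
    (hp : p ∈ Y) (h : (1/2:ℝ) < p j) : cval Y j ≤ p j :=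
  Finset.min'_le _ _ (Finset.mem_insert_of_mem
    (Finset.mem_image_of_mem _ (Finset.mem_filter.mpr ⟨hp, h⟩)))

lemma core_lemma (D : ℕ) (i₀ : Fin D) (Y : Finset (Fin D → ℝ))
    (hm : 2 ^ Y.card < D) :
    ∃ a b : Fin D → ℝ, (∀ i, 0 ≤ a i ∧ a i < b i ∧ b i ≤ 1) ∧
      a i₀ = 0 ∧ b i₀ = 1 ∧
      (∀ p ∈ Y, ∃ i, i ≠ i₀ ∧ p i ∉ Set.Ioo (a i) (b i)) ∧
      (1/4 : ℝ) < ∏ i, (b i - a i) := by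
  classical
  rcases Y.eq_empty_or_nonempty with hY | ⟨y₀, hy₀⟩
  · subst hY
    refine ⟨fun _ => 0, fun _ => 1, fun i => by norm_num, rfl, rfl, by simp, by norm_num⟩
  · set E := Y.erase y₀ with hE
    have hcardE : E.card = Y.card - 1 := Finset.card_erase_of_mem hy₀
    have hYpos : 1 ≤ Y.card := Finset.card_pos.mpr ⟨y₀, hy₀⟩
    have hcard1 : Fintype.card (↥E → Bool) < Fintype.card {i : Fin D // i ≠ i₀} := by
      rw [Fintype.card_fun, Fintype.card_coe, Fintype.card_bool, hcardE]
      have h1 : Fintype.card {i : Fin D // i ≠ i₀} = D - 1 := by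
        simp [Fintype.card_subtype_compl]
      rw [h1]
      have h2 : 2 ^ (Y.card - 1) * 2 = 2 ^ Y.card := by
        rw [← pow_succ]; congr 1; omega
      have h3 : 1 ≤ 2 ^ (Y.card - 1) := Nat.one_le_two_pow
      omega
    obtain ⟨j, j', hne, hφ⟩ := Fintype.exists_ne_map_eq_of_card_lt
      (fun (jj : {i : Fin D // i ≠ i₀}) => fun (p : ↥E) =>
        decide ((1/2:ℝ) < (p : Fin D → ℝ) jj.1 ↔ (1/2:ℝ) < y₀ jj.1)) hcard1
    have key : ∀ p ∈ E, ((((1/2:ℝ) < p j.1) ↔ ((1/2:ℝ) < y₀ j.1)) ↔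
        (((1/2:ℝ) < p j'.1) ↔ ((1/2:ℝ) < y₀ j'.1))) := by
      intro p hp
      have h := congrFun hφ ⟨p, hp⟩
      simpa [decide_eq_decide] using h
    have hcoord : j.1 ≠ j'.1 := fun h => hne (Subtype.ext h)
    have hji : j.1 ≠ i₀ := j.2
    have hj'i : j'.1 ≠ i₀ := j'.2
    have hmemY : ∀ p ∈ Y, p = y₀ ∨ p ∈ E := by
      intro p hp
      by_cases hpy : p = y₀
      · exact Or.inl hpy
      · exact Or.inr (Finset.mem_erase.mpr ⟨hpy, hp⟩)
    by_cases hy : ((1/2:ℝ) < y₀ j.1) ↔ ((1/2:ℝ) < y₀ j'.1)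
    · -- equal columns
      have hiff : ∀ p ∈ Y, (((1/2:ℝ) < p j.1) ↔ ((1/2:ℝ) < p j'.1)) := by
        intro p hp
        rcases hmemY p hp with rfl | hpE
        · exact hy
        · have := key p hpE; tauto
      set c := cval Y j.1 with hc
      have hc1 : c ≤ 1 := cval_le_one Y j.1
      have hc2 : (1/2:ℝ) < c := half_lt_cval Y j.1
      refine ⟨(fun i => if i = j'.1 then (1/2:ℝ) else 0),
              (fun i => if i = j.1 then c else 1), ?_, ?_, ?_, ?_, ?_⟩
      · intro i
        dsimp only
        by_cases h1 : i = j.1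
        · subst h1
          rw [if_neg hcoord, if_pos rfl]
          exact ⟨le_refl 0, by linarith, hc1⟩
        · by_cases h2 : i = j'.1
          · subst h2
            rw [if_pos rfl, if_neg (fun hh => h1 hh)]
            norm_num
          · rw [if_neg h2, if_neg h1]; norm_num
      · dsimp only; rw [if_neg (Ne.symm hj'i)]
      · dsimp only; rw [if_neg (Ne.symm hji)]
      · intro p hp
        by_cases hpj : (1/2:ℝ) < p j.1
        · refine ⟨j.1, hji, ?_⟩
          dsimp only
          rw [if_neg hcoord, if_pos rfl]
          intro hmem
          exact absurd hmem.2 (not_lt.mpr (cval_le Y j.1 p hp hpj))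
        · refine ⟨j'.1, hj'i, ?_⟩
          dsimp only
          rw [if_pos rfl, if_neg (Ne.symm hcoord)]
          intro hmem
          exact (fun hq => hpj ((hiff p hp).mpr hq)) hmem.1
      · have hout : ∀ i ∈ Finset.univ, i ∉ ({j.1, j'.1} : Finset (Fin D)) →
            ((if i = j.1 then c else 1) - (if i = j'.1 then (1/2:ℝ) else 0)) = 1 := by
          intro i _ hi
          simp only [Finset.mem_insert, Finset.mem_singleton] at hi
          push_neg at hi
          rw [if_neg hi.1, if_neg hi.2]; ring
        dsimp only
        rw [← Finset.prod_subset (Finset.subset_univ ({j.1, j'.1} : Finset (Fin D))) hout,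
          Finset.prod_pair hcoord]
        rw [if_pos rfl, if_neg hcoord, if_pos rfl, if_neg (Ne.symm hcoord)]
        nlinarith
    · -- complementary columns
      have hiff : ∀ p ∈ Y, (((1/2:ℝ) < p j.1) ↔ ¬((1/2:ℝ) < p j'.1)) := by
        intro p hp
        rcases hmemY p hp with rfl | hpE
        · tauto
        · have := key p hpE; tauto
      set c₁ := cval Y j.1 with hc₁
      set c₂ := cval Y j'.1 with hc₂
      have hc11 : c₁ ≤ 1 := cval_le_one Y j.1
      have hc12 : (1/2:ℝ) < c₁ := half_lt_cval Y j.1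
      have hc21 : c₂ ≤ 1 := cval_le_one Y j'.1
      have hc22 : (1/2:ℝ) < c₂ := half_lt_cval Y j'.1
      refine ⟨(fun _ => 0),
              (fun i => if i = j.1 then c₁ else if i = j'.1 then c₂ else 1), ?_, ?_, ?_, ?_, ?_⟩
      · intro i
        dsimp only
        by_cases h1 : i = j.1
        · subst h1; rw [if_pos rfl]; exact ⟨le_refl 0, by linarith, hc11⟩
        · by_cases h2 : i = j'.1
          · subst h2; rw [if_neg h1, if_pos rfl]; exact ⟨le_refl 0, by linarith, hc21⟩
          · rw [if_neg h1, if_neg h2]; norm_num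
      · rfl
      · dsimp only; rw [if_neg (Ne.symm hji), if_neg (Ne.symm hj'i)]
      · intro p hp
        by_cases hpj : (1/2:ℝ) < p j.1
        · refine ⟨j.1, hji, ?_⟩
          dsimp only
          rw [if_pos rfl]
          intro hmem
          exact absurd hmem.2 (not_lt.mpr (cval_le Y j.1 p hp hpj))
        · refine ⟨j'.1, hj'i, ?_⟩
          dsimp only
          rw [if_neg (Ne.symm hcoord), if_pos rfl]
          intro hmem
          have hq : (1/2:ℝ) < p j'.1 := by have := hiff p hp; tauto
          exact absurd hmem.2 (not_lt.mpr (cval_le Y j'.1 p hp hq))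
      · have hout : ∀ i ∈ Finset.univ, i ∉ ({j.1, j'.1} : Finset (Fin D)) →
            ((if i = j.1 then c₁ else if i = j'.1 then c₂ else 1) - 0) = 1 := by
          intro i _ hi
          simp only [Finset.mem_insert, Finset.mem_singleton] at hi
          push_neg at hi
          rw [if_neg hi.1, if_neg hi.2]; ring
        dsimp only
        rw [← Finset.prod_subset (Finset.subset_univ ({j.1, j'.1} : Finset (Fin D))) hout,
          Finset.prod_pair hcoord]
        rw [if_pos rfl, if_neg (Ne.symm hcoord), if_pos rfl]
        nlinarith

lemma hitting_of_disp_le {d : ℕ} (X : Finset (Fin d → ℝ)) {ε : ℝ}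
    (hdisp : disp (X : Set (Fin d → ℝ)) ≤ ε)
    (a b : Fin d → ℝ) (hab : ∀ i, 0 ≤ a i ∧ a i < b i ∧ b i ≤ 1)
    (hv : ε < ∏ i, (b i - a i)) : ∃ p ∈ X, ∀ i, p i ∈ Set.Ioo (a i) (b i) := by
  by_contra hcon
  push_neg at hcon
  have hbdd : BddAbove {v | ∃ a b : Fin d → ℝ, (∀ i, 0 ≤ a i ∧ a i < b i ∧ b i ≤ 1) ∧
      (∀ x ∈ (X : Set (Fin d → ℝ)), ∃ i, x i ∉ Set.Ioo (a i) (b i)) ∧ v = ∏ i, (b i - a i)} := by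
    refine ⟨1, ?_⟩
    rintro v ⟨a', b', hab', -, rfl⟩
    exact Finset.prod_le_one (fun i _ => by have := hab' i; linarith)
      (fun i _ => by have := hab' i; linarith)
  have hmem : (∏ i, (b i - a i)) ∈ {v | ∃ a b : Fin d → ℝ,
      (∀ i, 0 ≤ a i ∧ a i < b i ∧ b i ≤ 1) ∧
      (∀ x ∈ (X : Set (Fin d → ℝ)), ∃ i, x i ∉ Set.Ioo (a i) (b i)) ∧
      v = ∏ i, (b i - a i)} := by
    refine ⟨a, b, hab, ?_, rfl⟩
    intro x hx
    obtain ⟨i, hi⟩ := hcon x (Finset.mem_coe.mp hx)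
    exact ⟨i, hi⟩
  have := le_csSup hbdd hmem
  rw [disp] at hdisp
  linarith

lemma exists_low_disp (d : ℕ) (ε : ℝ) (hε1 : 0 < ε) :
    ∃ X : Finset (Fin d → ℝ), (∀ x ∈ X, ∀ i, x i ∈ Set.Icc (0:ℝ) 1) ∧
      disp (X : Set (Fin d → ℝ)) ≤ ε := by
  classical
  set N : ℕ := ⌈1/ε⌉₊ with hN
  have hNε : 1/ε ≤ (N:ℝ) := Nat.le_ceil _
  have hNpos : (0:ℝ) < (N:ℝ) + 1 := by positivity
  set v : Fin N → ℝ := fun k => ((k:ℝ)+1)/((N:ℝ)+1) with hv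
  set X : Finset (Fin d → ℝ) := Fintype.piFinset (fun _ : Fin d => Finset.univ.image v) with hX
  refine ⟨X, ?_, ?_⟩
  · intro x hx i
    have hxi := (Fintype.mem_piFinset.mp hx) i
    obtain ⟨k, -, hk⟩ := Finset.mem_image.mp hxi
    rw [← hk]
    constructor
    · positivity
    · rw [div_le_one hNpos]
      have : (k:ℝ) + 1 ≤ (N:ℝ) := by
        have := k.2
        exact_mod_cast this
      linarith
  · apply Real.sSup_le _ hε1.le
    rintro w ⟨a, b, hab, havoid, rfl⟩
    by_contra hgt
    push_neg at hgt
    have hside : ∀ i, ∃ k : Fin N, a i < v k ∧ v k < b i := by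
      intro i
      have hfac : ∏ i', (b i' - a i') ≤ b i - a i := by
        have h1 : ∏ i', (b i' - a i') =
            (b i - a i) * ∏ i' ∈ Finset.univ.erase i, (b i' - a i') :=
          (Finset.mul_prod_erase _ _ (Finset.mem_univ i)).symm
        have h2 : ∏ i' ∈ Finset.univ.erase i, (b i' - a i') ≤ 1 :=
          Finset.prod_le_one (fun k _ => by have := hab k; linarith)
            (fun k _ => by have := hab k; linarith)
        have h2' : (0:ℝ) ≤ ∏ i' ∈ Finset.univ.erase i, (b i' - a i') :=
          Finset.prod_nonneg (fun k _ => by have := hab k; linarith)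
        have h3 : 0 ≤ b i - a i := by have := hab i; linarith
        rw [h1]; nlinarith
      have hba : ε < b i - a i := lt_of_lt_of_le hgt hfac
      have hai0 : 0 ≤ a i := (hab i).1
      have hbi1 : b i ≤ 1 := (hab i).2.2
      set jn : ℕ := ⌊a i * ((N:ℝ)+1)⌋₊ with hjn
      have hj1 : (jn:ℝ) ≤ a i * ((N:ℝ)+1) := Nat.floor_le (by positivity)
      have hj2 : a i * ((N:ℝ)+1) < (jn:ℝ) + 1 := Nat.lt_floor_add_one _
      have hNε1 : 1 ≤ (N:ℝ) * ε := by
        rw [div_le_iff₀ hε1] at hNε; linarith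
      have hgrid_gt : a i < ((jn:ℝ)+1)/((N:ℝ)+1) := by
        rw [lt_div_iff₀ hNpos]; linarith
      have hlt_b : ((jn:ℝ)+1)/((N:ℝ)+1) < b i := by
        rw [div_lt_iff₀ hNpos]
        nlinarith
      have hjN : jn < N := by
        have h5 : ((jn:ℝ)+1)/((N:ℝ)+1) < 1 := lt_of_lt_of_le hlt_b hbi1
        rw [div_lt_one hNpos] at h5
        have : (jn:ℝ) < (N:ℝ) := by linarith
        exact_mod_cast this
      exact ⟨⟨jn, hjN⟩, hgrid_gt, hlt_b⟩
    choose k hk1 hk2 using hside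
    have hpX : (fun i => v (k i)) ∈ X :=
      Fintype.mem_piFinset.mpr (fun i => Finset.mem_image_of_mem _ (Finset.mem_univ _))
    obtain ⟨i, hi⟩ := havoid _ (Finset.mem_coe.mpr hpX)
    exact hi ⟨hk1 i, hk2 i⟩

theorem AHR_lower_bound (d : ℕ) (hd : 2 ≤ d) (ε : ℝ) (hε1 : 0 < ε) (hε2 : ε < 1 / 4) :
    (Nfun ε d : ℝ) ≥ Real.logb 2 d / (8 * ε) := by
  classical
  obtain ⟨X₀, hX₀cube, hX₀disp⟩ := exists_low_disp d ε hε1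
  have hSne : {n | ∃ X : Finset (Fin d → ℝ),
      (∀ x ∈ X, ∀ i, x i ∈ Set.Icc (0:ℝ) 1) ∧ X.card = n ∧
      disp (X : Set (Fin d → ℝ)) ≤ ε}.Nonempty :=
    ⟨X₀.card, X₀, hX₀cube, rfl, hX₀disp⟩
  have hmem := Nat.sInf_mem hSne
  obtain ⟨X, hcube, hcard, hdisp⟩ := hmem
  have hNfun : X.card = Nfun ε d := hcard
  rw [ge_iff_le, ← hNfun]
  have hd0 : 0 < d := lt_of_lt_of_le (by norm_num) hd
  have hd1 : (1:ℝ) ≤ (d:ℝ) := by exact_mod_cast Nat.one_le_of_lt hd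
  set i₀ : Fin d := ⟨0, hd0⟩ with hi₀
  have hε4 : (1:ℝ) ≤ 1/(4*ε) := by
    rw [le_div_iff₀ (by linarith)]; linarith
  set s : ℕ := ⌊1/(4*ε)⌋₊ with hsdef
  have hs1 : 1 ≤ s := Nat.le_floor (by exact_mod_cast hε4)
  have hs0' : (0:ℝ) < (s:ℝ) := by exact_mod_cast hs1
  have hsle : (s:ℝ) ≤ 1/(4*ε) := Nat.floor_le (by positivity)
  set slab : ℕ → Finset (Fin d → ℝ) :=
    fun t => X.filter (fun p => (t:ℝ)/(s:ℝ) < p i₀ ∧ p i₀ < ((t:ℝ)+1)/(s:ℝ)) with hslab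
  have hkey : ∀ t, t < s → d ≤ 2 ^ (slab t).card := by
    intro t ht
    by_contra hlt
    push_neg at hlt
    obtain ⟨a, b, hab, hai, hbi, hexcl, hvol⟩ := core_lemma d i₀ (slab t) hlt
    set A := Function.update a i₀ ((t:ℝ)/(s:ℝ)) with hA
    set B := Function.update b i₀ (((t:ℝ)+1)/(s:ℝ)) with hB
    have hABi : ∀ i, 0 ≤ A i ∧ A i < B i ∧ B i ≤ 1 := by
      intro i
      by_cases h : i = i₀
      · subst h
        rw [hA, hB, Function.update_self, Function.update_self]
        refine ⟨by positivity, ?_, ?_⟩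
        · rw [div_lt_div_iff_of_pos_right hs0'] <;> try linarith
        · rw [div_le_one hs0']
          have : (t:ℝ) + 1 ≤ (s:ℝ) := by exact_mod_cast ht
          linarith
      · rw [hA, hB, Function.update_of_ne h, Function.update_of_ne h]
        exact hab i
    have hprod : ∏ i, (B i - A i) = (1/(s:ℝ)) * ∏ i, (b i - a i) := by
      have hBA : (fun i => B i - A i) = Function.update (fun i => b i - a i) i₀ (1/(s:ℝ)) := by
        funext i
        by_cases h : i = i₀
        · subst h
          rw [hA, hB, Function.update_self, Function.update_self, Function.update_self]
          field_simp
          ring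
        · rw [hA, hB, Function.update_of_ne h, Function.update_of_ne h,
            Function.update_of_ne h]
      have h1 : ∏ i, (B i - A i) = ∏ i, Function.update (fun i => b i - a i) i₀ (1/(s:ℝ)) i := by
        rw [hBA]
      rw [h1, Finset.prod_update_of_mem (Finset.mem_univ i₀)]
      have h2 : ∏ i ∈ Finset.univ.erase i₀, (b i - a i) = ∏ i, (b i - a i) := by
        have h3 := Finset.mul_prod_erase Finset.univ (fun i => b i - a i) (Finset.mem_univ i₀)
        simpa [hai, hbi] using h3
      rw [Finset.sdiff_singleton_eq_erase, h2]
    have hvol' : ε < ∏ i, (B i - A i) := by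
      rw [hprod]
      have hεs : ε * (4*(s:ℝ)) ≤ 1 := by
        have := (le_div_iff₀ (by linarith : (0:ℝ) < 4*ε)).mp hsle
        nlinarith
      have h14 : 1/(4*(s:ℝ)) < (1/(s:ℝ)) * ∏ i, (b i - a i) := by
        have := mul_lt_mul_of_pos_left hvol (by positivity : (0:ℝ) < 1/(s:ℝ))
        calc 1/(4*(s:ℝ)) = (1/(s:ℝ)) * (1/4) := by ring
          _ < (1/(s:ℝ)) * ∏ i, (b i - a i) := this
      have hε14 : ε ≤ 1/(4*(s:ℝ)) := by
        rw [le_div_iff₀ (by positivity)]; linarith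
      linarith
    obtain ⟨p, hpX, hpin⟩ := hitting_of_disp_le X hdisp A B hABi hvol'
    have hpslab : p ∈ slab t := by
      rw [hslab]
      refine Finset.mem_filter.mpr ⟨hpX, ?_⟩
      have h := hpin i₀
      rw [hA, hB, Function.update_self, Function.update_self] at h
      exact ⟨h.1, h.2⟩
    obtain ⟨i, hii₀, hout⟩ := hexcl p hpslab
    have h := hpin i
    rw [hA, hB, Function.update_of_ne hii₀, Function.update_of_ne hii₀] at h
    exact hout h
  have hsum : ∑ t ∈ Finset.range s, (slab t).card ≤ X.card := by
    have hdisj : ∀ t ∈ Finset.range s, ∀ t' ∈ Finset.range s, t ≠ t' →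
        Disjoint (slab t) (slab t') := by
      intro t _ t' _ hne
      rw [Finset.disjoint_left]
      intro p hp hp'
      rw [hslab] at hp hp'
      obtain ⟨-, h1, h2⟩ := Finset.mem_filter.mp hp
      obtain ⟨-, h1', h2'⟩ := Finset.mem_filter.mp hp'
      rcases Nat.lt_or_ge t t' with h | h
      · have hc : ((t:ℝ)+1) ≤ (t':ℝ) := by exact_mod_cast h
        have : ((t:ℝ)+1)/(s:ℝ) ≤ (t':ℝ)/(s:ℝ) := by gcongr
        linarith
      · have ht' : t' < t := lt_of_le_of_ne h (Ne.symm hne)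
        have hc : ((t':ℝ)+1) ≤ (t:ℝ) := by exact_mod_cast ht'
        have : ((t':ℝ)+1)/(s:ℝ) ≤ (t:ℝ)/(s:ℝ) := by gcongr
        linarith
    calc ∑ t ∈ Finset.range s, (slab t).card
        = ((Finset.range s).biUnion slab).card := (Finset.card_biUnion hdisj).symm
      _ ≤ X.card := Finset.card_le_card (Finset.biUnion_subset.mpr
          (fun t _ => by rw [hslab]; exact Finset.filter_subset _ _))
  have hlog : ∀ t, t < s → Real.logb 2 (d:ℝ) ≤ ((slab t).card : ℝ) := by
    intro t ht
    rw [Real.logb_le_iff_le_rpow (by norm_num) (by linarith)]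
    rw [Real.rpow_natCast]
    exact_mod_cast hkey t ht
  have hlogb_nonneg : 0 ≤ Real.logb 2 (d:ℝ) := Real.logb_nonneg (by norm_num) hd1
  have hs8 : 1/(8*ε) ≤ (s:ℝ) := by
    have hfl : 1/(4*ε) < (s:ℝ) + 1 := Nat.lt_floor_add_one _
    have h1s : (1:ℝ) ≤ (s:ℝ) := by exact_mod_cast hs1
    have he : 1/(8*ε) = (1/(4*ε))/2 := by ring
    rcases le_or_gt (1/(4*ε)) 2 with h | h
    · rw [he]; linarith
    · rw [he]; linarith
  calc Real.logb 2 (d:ℝ) / (8*ε) = Real.logb 2 (d:ℝ) * (1/(8*ε)) := by ring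
    _ ≤ Real.logb 2 (d:ℝ) * (s:ℝ) := mul_le_mul_of_nonneg_left hs8 hlogb_nonneg
    _ = ∑ _t ∈ Finset.range s, Real.logb 2 (d:ℝ) := by
        rw [Finset.sum_const, Finset.card_range, nsmul_eq_mul]; ring
    _ ≤ ∑ t ∈ Finset.range s, ((slab t).card : ℝ) :=
        Finset.sum_le_sum (fun t ht => hlog t (Finset.mem_range.mp ht))
    _ = ((∑ t ∈ Finset.range s, (slab t).card : ℕ) : ℝ) := by rw [Nat.cast_sum]
    _ ≤ (X.card : ℝ) := by exact_mod_cast hsum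
end

section
/- Let d ≥ 2 and r ≥ 1 be integers with r < d, and let B be the collection of boxes B^{A,j} ⊆ [0,1]^d over all A ⊆ {1,…,d} with #A = r and j ∈ {1,…,d}\A (where B^{A,j} restricts coordinate j to (0,δ), coordinates in A to (δ,1) for a fixed δ ∈ (0,1), and leaves the rest unrestricted). Then #B = C(d,r)·(d−r), and any set X ⊆ [0,1]^d hitting all boxes in B gives rise, via F_j = {x ∈ X : x_j < δ}, to an r-cover-free family of d subsets of X. -/
/-- The test box `B^{A,j}` with parameter `δ`: coordinate `j` restricted to `(0,δ)`,
coordinates in `A` restricted to `(δ,1)`, the remaining coordinates restricted to `(0,1)`. -/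
def testBox {d : ℕ} (δ : ℝ) (A : Finset (Fin d)) (j : Fin d) : Set (Fin d → ℝ) :=
  {x | (0 < x j ∧ x j < δ) ∧ (∀ i ∈ A, δ < x i ∧ x i < 1) ∧
    ∀ i, i ≠ j → i ∉ A → 0 < x i ∧ x i < 1}

lemma testBox_inj {d : ℕ} {δ : ℝ} (hδ : δ ∈ Set.Ioo (0:ℝ) 1)
    {A A' : Finset (Fin d)} {j j' : Fin d} (hj : j ∉ A) (hj' : j' ∉ A')
    (hc : A.card = A'.card) (h : testBox δ A j = testBox δ A' j') : A = A' ∧ j = j' := by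
  obtain ⟨h0, h1⟩ := hδ
  have hmid : δ < (1+δ)/2 := by linarith
  have hmid1 : (1+δ)/2 < 1 := by linarith
  have hhalf0 : (0:ℝ) < δ/2 := by linarith
  have hhalf : δ/2 < δ := by linarith
  have hz : (fun i => if i = j then δ/2 else (1+δ)/2) ∈ testBox δ A j := by
    refine ⟨⟨by simp [hhalf0], by simp [hhalf]⟩, fun i hi => ?_, fun i hij _ => ?_⟩
    · have hne : i ≠ j := fun e => hj (e ▸ hi)
      simp only [if_neg hne]
      exact ⟨hmid, hmid1⟩
    · simp only [if_neg hij]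
      constructor <;> linarith
  have hz' : (fun i => if i = j then δ/2 else (1+δ)/2) ∈ testBox δ A' j' := h ▸ hz
  have hjj : j = j' := by
    by_contra hne
    have h2 := hz'.1.2
    simp only [if_neg (Ne.symm hne)] at h2
    linarith
  subst hjj
  have hy : (fun i => if i ∈ A then (1+δ)/2 else δ/2) ∈ testBox δ A j := by
    refine ⟨⟨?_, ?_⟩, fun i hi => ?_, fun i _ hiA => ?_⟩
    · simp only [if_neg hj]; linarith
    · simp only [if_neg hj]; linarith
    · simp only [if_pos hi]; exact ⟨hmid, hmid1⟩
    · simp only [if_neg hiA]; constructor <;> linarith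
  have hy' : (fun i => if i ∈ A then (1+δ)/2 else δ/2) ∈ testBox δ A' j := h ▸ hy
  have hsub : A' ⊆ A := by
    intro i hi
    by_contra hiA
    have h2 := (hy'.2.1 i hi).1
    simp only [if_neg hiA] at h2
    linarith
  exact ⟨(Finset.eq_of_subset_of_card_le hsub hc.le).symm, rfl⟩

open Classical in
theorem test_box_count_and_cover_free (d r : ℕ) (hd : 2 ≤ d) (hr : 1 ≤ r) (hrd : r < d)
    (δ : ℝ) (hδ : δ ∈ Set.Ioo (0 : ℝ) 1) :
    {B : Set (Fin d → ℝ) | ∃ (A : Finset (Fin d)) (j : Fin d),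
        A.card = r ∧ j ∉ A ∧ B = testBox δ A j}.ncard = Nat.choose d r * (d - r) ∧
    ∀ X : Finset (Fin d → ℝ),
      (∀ (A : Finset (Fin d)) (j : Fin d), A.card = r → j ∉ A →
        ∃ x ∈ X, x ∈ testBox δ A j) →
      ∀ (j : Fin d) (A : Finset (Fin d)), A.card = r → j ∉ A →
        ¬ ((X.filter fun x => x j < δ) ⊆ A.biUnion fun i => X.filter fun x => x i < δ) := by
  classical
  constructor
  · set P : Finset (Finset (Fin d) × Fin d) :=
      (Finset.univ.powersetCard r ×ˢ Finset.univ).filter fun p => p.2 ∉ p.1 with hP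
    have hset : {B : Set (Fin d → ℝ) | ∃ (A : Finset (Fin d)) (j : Fin d),
        A.card = r ∧ j ∉ A ∧ B = testBox δ A j}
        = ↑(P.image fun p => testBox δ p.1 p.2) := by
      ext B
      simp only [Set.mem_setOf_eq, Finset.coe_image, Set.mem_image, Finset.mem_coe, hP,
        Finset.mem_filter, Finset.mem_product, Finset.mem_powersetCard_univ,
        Finset.mem_univ, and_true, true_and]
      constructor
      · rintro ⟨A, j, hA, hj, rfl⟩
        exact ⟨⟨A, j⟩, ⟨hA, hj⟩, rfl⟩
      · rintro ⟨⟨A, j⟩, ⟨hA, hj⟩, rfl⟩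
        exact ⟨A, j, hA, hj, rfl⟩
    rw [hset, Set.ncard_coe_finset]
    have hinj : Set.InjOn (fun p : Finset (Fin d) × Fin d => testBox δ p.1 p.2) P := by
      rintro ⟨A, j⟩ hp ⟨A', j'⟩ hp' heq
      simp only [hP, Finset.mem_coe, Finset.mem_filter, Finset.mem_product,
        Finset.mem_powersetCard_univ, Finset.mem_univ, and_true, true_and] at hp hp'
      obtain ⟨hAA, hjj⟩ := testBox_inj hδ hp.2 hp'.2 (hp.1.trans hp'.1.symm) heq
      simp [hAA, hjj]
    rw [Finset.card_image_of_injOn hinj]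
    have hPdecomp : P = (Finset.univ.powersetCard r).biUnion
        (fun A => Aᶜ.image fun j => (A, j)) := by
      ext ⟨A, j⟩
      simp only [hP, Finset.mem_filter, Finset.mem_product, Finset.mem_univ, and_true]
      constructor
      · rintro ⟨hA, hj⟩
        rw [Finset.mem_powersetCard_univ] at hA
        exact Finset.mem_biUnion.2 ⟨A, Finset.mem_powersetCard_univ.2 hA,
          Finset.mem_image.2 ⟨j, Finset.mem_compl.2 hj, rfl⟩⟩
      · intro hmem
        obtain ⟨a, ha, hm⟩ := Finset.mem_biUnion.1 hmem
        obtain ⟨b, hb, he⟩ := Finset.mem_image.1 hm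
        injection he with e1 e2
        subst e1; subst e2
        exact ⟨ha, Finset.mem_compl.1 hb⟩
    have hdisj : ∀ A : Finset (Fin d), A ∈ Finset.univ.powersetCard r →
        ∀ A' : Finset (Fin d), A' ∈ Finset.univ.powersetCard r →
        A ≠ A' → Disjoint (Aᶜ.image fun j => (A, j)) (A'ᶜ.image fun j => (A', j)) := by
      intro A hA A' hA' hAA'
      simp only [Finset.disjoint_left, Finset.mem_image]
      rintro ⟨B, j⟩ ⟨a, ha, h1⟩ ⟨a', ha', h2⟩
      injection h1 with e1 e2
      injection h2 with e3 e4
      exact hAA' (e1 ▸ e3 ▸ rfl)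
    rw [hPdecomp]
    rw [Finset.card_biUnion hdisj]
    have : ∀ A : Finset (Fin d), A ∈ Finset.univ.powersetCard r →
          (Aᶜ.image fun j => (A, j)).card = d - r := by
        intro A hA
        rw [Finset.mem_powersetCard_univ] at hA
        rw [Finset.card_image_of_injective _ (fun a b h => by injection h),
          Finset.card_compl, hA, Fintype.card_fin]
    rw [Finset.sum_congr rfl this, Finset.sum_const, smul_eq_mul,
      Finset.card_powersetCard, Finset.card_univ, Fintype.card_fin]
  · intro X hX j A hA hj hsub
    obtain ⟨x, hxX, hxB⟩ := hX A j hA hj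
    have hxF : x ∈ X.filter fun x => x j < δ := Finset.mem_filter.2 ⟨hxX, hxB.1.2⟩
    have := hsub hxF
    rw [Finset.mem_biUnion] at this
    obtain ⟨i, hiA, hxi⟩ := this
    have := (Finset.mem_filter.1 hxi).2
    have := (hxB.2.1 i hiA).1
    linarith
end
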